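/- A commutative inverse monoid M is isomorphic (as an involutive monoid) to the disjoint union ∐_{s ∈ S} F(s) over its semilattice S of idempotents, where F(s) = { x | x x† = s }, with multiplication of x ∈ F(s) and y ∈ F(t) given by (st·x)(st·y) computed in F(st). -/
import Mathlib


/-- A commutative inverse monoid `M` is isomorphic (as an
involutive monoid) to the disjoint union `∐_{s ∈ S} F(s)` over its semilattice
`S` of idempotents, where `F(s) = { x | x * dag x = s }`, with multiplication
of `x ∈ F(s)` and `y ∈ F(t)` given by `(s*t*x) * (s*t*y)` computed in `F(s*t)`,
involution given componentwise by `dag`, and unit `1 ∈ F(1)`. -/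
theorem stmt5 {M : Type*} [CommMonoid M] (dag : M → M)
    (h1 : ∀ x : M, x * dag x * x = x)
    (h2 : ∀ x : M, dag x * x * dag x = dag x)
    (huniq : ∀ x y : M, x * y * x = x → y * x * y = y → y = dag x) :
    ∃ (mul' : (Σ s : {s : M // s * dag s = s}, {x : M // x * dag x = s.1}) →
              (Σ s : {s : M // s * dag s = s}, {x : M // x * dag x = s.1}) →
              (Σ s : {s : M // s * dag s = s}, {x : M // x * dag x = s.1}))
      (inv' : (Σ s : {s : M // s * dag s = s}, {x : M // x * dag x = s.1}) →
              (Σ s : {s : M // s * dag s = s}, {x : M // x * dag x = s.1}))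
      (one' : Σ s : {s : M // s * dag s = s}, {x : M // x * dag x = s.1})
      (e : M ≃ Σ s : {s : M // s * dag s = s}, {x : M // x * dag x = s.1}),
      (∀ a b, ((mul' a b).1 : M) = (a.1 : M) * (b.1 : M)) ∧
      (∀ a b, ((mul' a b).2 : M) =
        ((a.1 : M) * (b.1 : M) * (a.2 : M)) * ((a.1 : M) * (b.1 : M) * (b.2 : M))) ∧
      (∀ a, ((inv' a).1 : M) = (a.1 : M) ∧ ((inv' a).2 : M) = dag (a.2 : M)) ∧
      ((one'.1 : M) = 1 ∧ (one'.2 : M) = 1) ∧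
      (∀ x y : M, e (x * y) = mul' (e x) (e y)) ∧
      (∀ x : M, e (dag x) = inv' (e x)) ∧
      e 1 = one' := by
  have hdd : ∀ x : M, dag (dag x) = x := fun x =>
    (huniq (dag x) x (h2 x) (h1 x)).symm
  have hdagmul : ∀ x y : M, dag (x * y) = dag x * dag y := by
    intro x y
    refine (huniq (x * y) (dag x * dag y) ?_ ?_).symm
    · calc x * y * (dag x * dag y) * (x * y)
          = (x * dag x * x) * (y * dag y * y) := by ac_rfl
        _ = x * y := by rw [h1, h1]
    · calc dag x * dag y * (x * y) * (dag x * dag y)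
          = (dag x * x * dag x) * (dag y * y * dag y) := by ac_rfl
        _ = dag x * dag y := by rw [h2, h2]
  have hidem : ∀ x : M, (x * dag x) * (x * dag x) = x * dag x := by
    intro x
    calc (x * dag x) * (x * dag x) = (x * dag x * x) * dag x := by ac_rfl
      _ = x * dag x := by rw [h1]
  have hdagidem : ∀ x : M, dag (x * dag x) = x * dag x := by
    intro x
    refine (huniq (x * dag x) (x * dag x) ?_ ?_).symm <;>
      rw [hidem, hidem]
  have hSidem : ∀ s : M, s * dag s = s → s * s = s := by
    intro s hs
    conv_lhs => rw [← hs]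
    rw [hidem]; exact hs
  have hSdag : ∀ s : M, s * dag s = s → dag s = s := by
    intro s hs
    have h := hSidem s hs
    exact (huniq s s (by rw [h, h]) (by rw [h, h])).symm
  have hd1 : dag (1 : M) = 1 :=
    (huniq 1 1 (by simp) (by simp)).symm
  -- helper: equality of sigma elements from equality of value components
  have sigeq : ∀ a b : (Σ s : {s : M // s * dag s = s}, {x : M // x * dag x = s.1}),
      (a.1 : M) = (b.1 : M) → (a.2 : M) = (b.2 : M) → a = b := by
    rintro ⟨⟨s, hs⟩, ⟨x, hx⟩⟩ ⟨⟨t, ht⟩, ⟨y, hy⟩⟩ hst hxy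
    dsimp at hst hxy
    subst hst; subst hxy
    rfl
  refine ⟨fun a b => ⟨⟨a.1.1 * b.1.1, ?_⟩,
      ⟨(a.1.1 * b.1.1 * a.2.1) * (a.1.1 * b.1.1 * b.2.1), ?_⟩⟩,
    fun a => ⟨a.1, ⟨dag a.2.1, ?_⟩⟩,
    ⟨⟨1, by rw [hd1, mul_one]⟩, ⟨1, by show (1:M) * dag 1 = 1; rw [hd1, mul_one]⟩⟩,
    ⟨fun x => ⟨⟨x * dag x, by rw [hdagidem, hidem]⟩, ⟨x, rfl⟩⟩,
      fun a => a.2.1, fun x => rfl, ?_⟩, fun a b => rfl, fun a b => rfl,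
    fun a => ⟨rfl, rfl⟩, ⟨rfl, rfl⟩, ?_, ?_, ?_⟩
  · -- s*t is in S
    obtain ⟨⟨s, hs⟩, ⟨x, hx⟩⟩ := a
    obtain ⟨⟨t, ht⟩, ⟨y, hy⟩⟩ := b
    dsimp
    rw [hdagmul, hSdag s hs, hSdag t ht]
    calc s * t * (s * t) = (s * s) * (t * t) := by ac_rfl
      _ = s * t := by rw [hSidem s hs, hSidem t ht]
  · -- the product lies in F(s*t)
    obtain ⟨⟨s, hs⟩, ⟨x, hx⟩⟩ := a
    obtain ⟨⟨t, ht⟩, ⟨y, hy⟩⟩ := b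
    dsimp at hx hy ⊢
    have hstS : (s * t) * dag (s * t) = s * t := by
      rw [hdagmul, hSdag s hs, hSdag t ht]
      calc s * t * (s * t) = (s * s) * (t * t) := by ac_rfl
        _ = s * t := by rw [hSidem s hs, hSidem t ht]
    have hst2 : (s * t) * (s * t) = s * t := hSidem _ hstS
    rw [hdagmul, hdagmul, hdagmul, hdagmul, hdagmul, hSdag s hs, hSdag t ht]
    calc s * t * x * (s * t * y) * (s * t * dag x * (s * t * dag y))
        = ((s*t)*(s*t)) * ((s*t)*(s*t)) * (x * dag x) * (y * dag y) := by ac_rfl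
      _ = (s*t) * (x * dag x) * (y * dag y) := by rw [hst2, hst2]
      _ = (s*t) * s * t := by rw [hx, hy]
      _ = (s*s) * (t*t) := by ac_rfl
      _ = s * t := by rw [hSidem s hs, hSidem t ht]
  · -- dag x lies in F(s)
    obtain ⟨⟨s, hs⟩, ⟨x, hx⟩⟩ := a
    dsimp
    rw [hdd, mul_comm]; exact hx
  · -- right inverse of e
    rintro ⟨⟨s, hs⟩, ⟨x, hx⟩⟩
    exact sigeq _ _ hx rfl
  · -- multiplicativity
    intro x y
    refine sigeq _ _ ?_ ?_
    · dsimp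
      rw [hdagmul]; ac_rfl
    · dsimp
      refine Eq.symm ?_
      calc (x * dag x * (y * dag y) * x) * (x * dag x * (y * dag y) * y)
          = ((x * dag x) * (x * dag x)) * ((y * dag y) * (y * dag y)) * (x * y) := by ac_rfl
        _ = (x * dag x) * (y * dag y) * (x * y) := by rw [hidem, hidem]
        _ = (x * dag x * x) * (y * dag y * y) := by ac_rfl
        _ = x * y := by rw [h1, h1]
  · -- involution
    intro x
    refine sigeq _ _ ?_ rfl
    dsimp
    rw [hdd, mul_comm]
  · -- unit
    exact sigeq _ _ (by dsimp; rw [hd1, mul_one]) rfl
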